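/- Let M be a Hermitian operator on (ℂ²)^⊗3 that commutes with every qubit-permutation operator V_σ (σ ∈ S₃) and with U₁ = R_{2π/3}^{⊗3}, and satisfies M|GHZ⟩ = |GHZ⟩ and M|W⟩ = |W⟩. Then: (i) v₁ = (|000⟩ − |111⟩)/√2 is an eigenvector of M; (ii) v₂ = (|001⟩ − |010⟩)/√2 and v₃ = (|001⟩ − |100⟩)/√2 are eigenvectors of M with a common eigenvalue; (iii) v₄ = (|011⟩ − |101⟩)/√2 and v₅ = (|011⟩ − |110⟩)/√2 are eigenvectors of M with a common eigenvalue; and (iv) v₆ = (|011⟩ + |101⟩ + |110⟩)/√3 is an eigenvector of M. In particular, M is diagonal in the orthonormal basis {|GHZ⟩, |W⟩, v₁, ..., v₆}. -/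

import Mathlib

noncomputable section

open Matrix

/-- The three-qubit index type: (ℂ²)^⊗3 is realized as functions Fin 2 × Fin 2 × Fin 2 → ℂ. -/
abbrev T3 := Fin 2 × Fin 2 × Fin 2

/-- Standard basis vector of ℂ². -/
def e2 (i : Fin 2) : Fin 2 → ℂ := fun j => if j = i then 1 else 0

/-- The simple tensor u ⊗ v in ℂ² ⊗ ℂ². -/
def tp2 (u v : Fin 2 → ℂ) : Fin 2 × Fin 2 → ℂ := fun p => u p.1 * v p.2

/-- The simple tensor u ⊗ v ⊗ w in (ℂ²)^⊗3. -/
def tp3 (u v w : Fin 2 → ℂ) : T3 → ℂ := fun p => u p.1 * v p.2.1 * w p.2.2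

/-- Standard basis vector |ijk⟩ of (ℂ²)^⊗3. -/
def ket3 (i j k : Fin 2) : T3 → ℂ := tp3 (e2 i) (e2 j) (e2 k)

/-- The three-qubit GHZ state (|000⟩ + |111⟩)/√2. -/
def GHZ : T3 → ℂ := (Real.sqrt 2 : ℂ)⁻¹ • (ket3 0 0 0 + ket3 1 1 1)

/-- The three-qubit W state (|001⟩ + |010⟩ + |100⟩)/√3. -/
def Wst : T3 → ℂ := (Real.sqrt 3 : ℂ)⁻¹ • (ket3 0 0 1 + ket3 0 1 0 + ket3 1 0 0)

/-- Outer product |u⟩⟨v| as a matrix. -/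
def outer {n : Type*} (u v : n → ℂ) : Matrix n n ℂ := fun i j => u i * star (v j)

/-- Kronecker (tensor) product of matrices, indexed by the product type. -/
def kron {m n : Type*} (A : Matrix m m ℂ) (B : Matrix n n ℂ) :
    Matrix (m × n) (m × n) ℂ := fun p q => A p.1 q.1 * B p.2 q.2

/-- The adaptive test operator M_Z = |0⟩⟨0| ⊗ (I − |11⟩⟨11|) + |1⟩⟨1| ⊗ (|00⟩⟨00| + |11⟩⟨11|). -/
def MZ : Matrix T3 T3 ℂ :=
  kron (outer (e2 0) (e2 0)) (1 - outer (tp2 (e2 1) (e2 1)) (tp2 (e2 1) (e2 1))) +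
  kron (outer (e2 1) (e2 1))
    (outer (tp2 (e2 0) (e2 0)) (tp2 (e2 0) (e2 0)) + outer (tp2 (e2 1) (e2 1)) (tp2 (e2 1) (e2 1)))

/-- |x₊⟩ = cos α |0⟩ + sin α |1⟩. -/
def xp (α : ℝ) : Fin 2 → ℂ := (Real.cos α : ℂ) • e2 0 + (Real.sin α : ℂ) • e2 1

/-- |x̄₊⟩ = sin α |0⟩ − cos α |1⟩. -/
def xbp (α : ℝ) : Fin 2 → ℂ := (Real.sin α : ℂ) • e2 0 - (Real.cos α : ℂ) • e2 1

/-- |x₋⟩ = (|0⟩ + e^{iπ/3}|1⟩)/√2. -/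
def xm : Fin 2 → ℂ :=
  (Real.sqrt 2 : ℂ)⁻¹ • (e2 0 + Complex.exp ((Real.pi / 3 : ℂ) * Complex.I) • e2 1)

/-- |x₋'⟩ = (|0⟩ + e^{−iπ/3}|1⟩)/√2. -/
def xm' : Fin 2 → ℂ :=
  (Real.sqrt 2 : ℂ)⁻¹ • (e2 0 + Complex.exp (-(Real.pi / 3 : ℂ) * Complex.I) • e2 1)

/-- |+⟩ = (|0⟩ + |1⟩)/√2. -/
def plus : Fin 2 → ℂ := (Real.sqrt 2 : ℂ)⁻¹ • (e2 0 + e2 1)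

/-- |−⟩ = (|0⟩ − |1⟩)/√2. -/
def minus : Fin 2 → ℂ := (Real.sqrt 2 : ℂ)⁻¹ • (e2 0 - e2 1)

/-- The one-way adaptive test operator
M_X = |+⟩⟨+| ⊗ (|x₊x₊⟩⟨x₊x₊| + |x̄₊x̄₊⟩⟨x̄₊x̄₊|) + |−⟩⟨−| ⊗ (I − |x₋x₋'⟩⟨x₋x₋'|). -/
def MX (α : ℝ) : Matrix T3 T3 ℂ :=
  kron (outer plus plus)
    (outer (tp2 (xp α) (xp α)) (tp2 (xp α) (xp α)) +
      outer (tp2 (xbp α) (xbp α)) (tp2 (xbp α) (xbp α))) +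
  kron (outer minus minus) (1 - outer (tp2 xm xm') (tp2 xm xm'))

/-- The qubit-permutation unitary V_σ with V_σ|i₁i₂i₃⟩ = |i_{σ⁻¹(1)} i_{σ⁻¹(2)} i_{σ⁻¹(3)}⟩,
as a matrix: (V_σ)_{p,q} = 1 iff the triple p precomposed with σ equals the triple q. -/
def permMat (σ : Equiv.Perm (Fin 3)) : Matrix T3 T3 ℂ :=
  fun p q => if (![p.1, p.2.1, p.2.2] ∘ σ) = ![q.1, q.2.1, q.2.2] then 1 else 0

/-- The single-qubit phase rotation R_φ = |0⟩⟨0| + e^{iφ}|1⟩⟨1|. -/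
def Rphi (φ : ℝ) : Matrix (Fin 2) (Fin 2) ℂ :=
  outer (e2 0) (e2 0) + Complex.exp ((φ : ℂ) * Complex.I) • outer (e2 1) (e2 1)

/-- The local unitary U₁ = R_{2π/3} ⊗ R_{2π/3} ⊗ R_{2π/3}. -/
def U1 : Matrix T3 T3 ℂ :=
  kron (Rphi (2 * Real.pi / 3)) (kron (Rphi (2 * Real.pi / 3)) (Rphi (2 * Real.pi / 3)))

/-- The projector Π₃ = |GHZ⟩⟨GHZ| + |W⟩⟨W| onto the GHZ-W subspace. -/
def Pi3 : Matrix T3 T3 ℂ := outer GHZ GHZ + outer Wst Wst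

/-- v₁ = (|000⟩ − |111⟩)/√2. -/
def v1 : T3 → ℂ := (Real.sqrt 2 : ℂ)⁻¹ • (ket3 0 0 0 - ket3 1 1 1)
/-- v₂ = (|001⟩ − |010⟩)/√2. -/
def v2 : T3 → ℂ := (Real.sqrt 2 : ℂ)⁻¹ • (ket3 0 0 1 - ket3 0 1 0)
/-- v₃ = (|001⟩ − |100⟩)/√2. -/
def v3 : T3 → ℂ := (Real.sqrt 2 : ℂ)⁻¹ • (ket3 0 0 1 - ket3 1 0 0)
/-- v₄ = (|011⟩ − |101⟩)/√2. -/
def v4 : T3 → ℂ := (Real.sqrt 2 : ℂ)⁻¹ • (ket3 0 1 1 - ket3 1 0 1)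
/-- v₅ = (|011⟩ − |110⟩)/√2. -/
def v5 : T3 → ℂ := (Real.sqrt 2 : ℂ)⁻¹ • (ket3 0 1 1 - ket3 1 1 0)
/-- v₆ = (|011⟩ + |101⟩ + |110⟩)/√3. -/
def v6 : T3 → ℂ := (Real.sqrt 3 : ℂ)⁻¹ • (ket3 0 1 1 + ket3 1 0 1 + ket3 1 1 0)

/-- σᵢ: the transposition exchanging qubits 1 and i (σ₁ = identity). -/
def sigmas : Fin 3 → Equiv.Perm (Fin 3) := ![1, Equiv.swap 0 1, Equiv.swap 0 2]

/-- M_{X,i} = V_{σᵢ} M_X V_{σᵢ}†: the test operator starting with an X measurement on qubit i. -/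
def MXi (α : ℝ) (i : Fin 3) : Matrix T3 T3 ℂ :=
  permMat (sigmas i) * MX α * (permMat (sigmas i))ᴴ

/-- The symmetrized test operator M̂_X = (1/9) Σ_{i=1}^{3} Σ_{j=0}^{2} U₁^{−j} M_{X,i} U₁^{j}. -/
def MXhat (α : ℝ) : Matrix T3 T3 ℂ :=
  ((1 : ℂ) / 9) • ∑ i : Fin 3, ∑ j : Fin 3, (U1 ^ (j : ℕ))⁻¹ * MXi α i * U1 ^ (j : ℕ)

/-- The rotation-strategy verification operator Ω_μ = (1 − μ) M_Z + μ M̂_X. -/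
def Omega (α μ : ℝ) : Matrix T3 T3 ℂ := ((1 - μ : ℝ) : ℂ) • MZ + (μ : ℂ) • MXhat α

/-- The projected verification operator Ω̂ = (I − Π₃) Ω_μ (I − Π₃). -/
def OmegaHat (α μ : ℝ) : Matrix T3 T3 ℂ := (1 - Pi3) * Omega α μ * (1 - Pi3)

/-- The set of (real) eigenvalues of Ω̂. -/
def eigSet (α μ : ℝ) : Set ℝ :=
  {r : ℝ | ∃ w : T3 → ℂ, w ≠ 0 ∧ OmegaHat α μ *ᵥ w = (r : ℂ) • w}


set_option maxHeartbeats 1600000 in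
/-- Any Hermitian operator commuting with all qubit permutations V_σ and with U₁ and fixing
|GHZ⟩ and |W⟩ has v₁, ..., v₆ as eigenvectors, with v₂, v₃ sharing a common eigenvalue and
v₄, v₅ sharing a common eigenvalue. -/
theorem symmetric_test_operator_is_diagonal
    (M : Matrix T3 T3 ℂ) (hH : M.IsHermitian)
    (hperm : ∀ σ : Equiv.Perm (Fin 3), M * permMat σ = permMat σ * M)
    (hU : M * U1 = U1 * M)
    (hGHZ : M *ᵥ GHZ = GHZ) (hW : M *ᵥ Wst = Wst) :
    ∃ c1 c2 c3 c4 : ℂ,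
      M *ᵥ v1 = c1 • v1 ∧
      M *ᵥ v2 = c2 • v2 ∧ M *ᵥ v3 = c2 • v3 ∧
      M *ᵥ v4 = c3 • v4 ∧ M *ᵥ v5 = c3 • v5 ∧
      M *ᵥ v6 = c4 • v6 := by
  classical
  set ω : ℂ := Complex.exp (↑(2*Real.pi/3) * Complex.I) with hωdef
  -- basic facts about ω
  have him1 : ω.im = Real.sin (2*Real.pi/3) := Complex.exp_ofReal_mul_I_im _
  have him2 : (ω*ω).im = Real.sin (2*(2*Real.pi/3)) := by
    rw [hωdef, ← Complex.exp_add,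
      show (↑(2*Real.pi/3) * Complex.I + ↑(2*Real.pi/3) * Complex.I : ℂ)
        = ↑(2*(2*Real.pi/3)) * Complex.I by push_cast; ring]
    exact Complex.exp_ofReal_mul_I_im _
  have hs1 : Real.sin (2*Real.pi/3) > 0 :=
    Real.sin_pos_of_pos_of_lt_pi (by positivity) (by linarith [Real.pi_pos])
  have hs2 : Real.sin (2*(2*Real.pi/3)) < 0 := by
    rw [show 2 * (2*Real.pi/3) = Real.pi + Real.pi/3 by ring, Real.sin_add]
    simp [Real.sin_pos_of_pos_of_lt_pi (show (0:ℝ) < Real.pi/3 by positivity)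
      (show Real.pi/3 < Real.pi by linarith [Real.pi_pos])]
  have hne1 : ω ≠ 1 := fun h => by
    have := congrArg Complex.im h; rw [him1] at this; simp at this; linarith
  have hne2 : ω * ω ≠ 1 := fun h => by
    have := congrArg Complex.im h; rw [him2] at this; simp at this; linarith
  have hne3 : ω * ω ≠ ω := fun h => by
    have := congrArg Complex.im h; rw [him2, him1] at this; linarith
  have hω3 : ω ^ 3 = 1 := by
    rw [hωdef, ← Complex.exp_nat_mul,
      show ((3:ℕ):ℂ) * (↑(2*Real.pi/3) * Complex.I) = 2 * ↑Real.pi * Complex.I by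
        push_cast; ring,
      Complex.exp_two_pi_mul_I]
  have hpow : ∀ i j : ℕ, i < 3 → j < 3 → i ≠ j → ω ^ i ≠ ω ^ j := by
    intro i j hi hj hij h
    interval_cases i <;> interval_cases j <;>
      first
        | exact hij rfl
        | exact hne1 (by linear_combination h)
        | exact hne1 (by linear_combination -h)
        | exact hne2 (by linear_combination h)
        | exact hne2 (by linear_combination -h)
        | exact hne3 (by linear_combination h)
        | exact hne3 (by linear_combination -h)
  -- U1 diagonal structure
  have hR0 : ∀ i j : Fin 2, i ≠ j → Rphi (2*Real.pi/3) i j = 0 := by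
    intro i j h
    fin_cases i <;> fin_cases j <;> simp_all [Rphi, outer, e2]
  have hRd : ∀ i : Fin 2, Rphi (2*Real.pi/3) i i = ω ^ (i.val) := by
    intro i; fin_cases i <;> simp [Rphi, outer, e2, hωdef]
  have hU1d : ∀ p : T3, U1 p p = ω ^ (p.1.val + p.2.1.val + p.2.2.val) := by
    intro p
    show Rphi _ _ _ * (Rphi _ _ _ * Rphi _ _ _) = _
    rw [hRd, hRd, hRd, ← pow_add, ← pow_add]; congr 1; omega
  have hU1off : ∀ p q : T3, p ≠ q → U1 p q = 0 := by
    intro p q h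
    have hc : p.1 ≠ q.1 ∨ p.2.1 ≠ q.2.1 ∨ p.2.2 ≠ q.2.2 := by
      by_contra hc; push_neg at hc
      exact h (Prod.ext hc.1 (Prod.ext hc.2.1 hc.2.2))
    show Rphi _ _ _ * (Rphi _ _ _ * Rphi _ _ _) = 0
    rcases hc with h1 | h1 | h1 <;> rw [hR0 _ _ h1] <;> ring
  have hMU : ∀ p q : T3, M p q * U1 q q = U1 p p * M p q := by
    intro p q
    have h := congrFun (congrFun hU p) q
    rw [Matrix.mul_apply, Matrix.mul_apply,
      Finset.sum_eq_single q (fun r _ hr => by rw [hU1off r q hr, mul_zero]) (by simp),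
      Finset.sum_eq_single p (fun r _ hr => by rw [hU1off p r (Ne.symm hr), zero_mul])
        (by simp)] at h
    exact h
  have hmod : ∀ n : ℕ, ω ^ n = ω ^ (n % 3) := fun n => by
    conv_lhs => rw [← Nat.div_add_mod n 3]
    rw [pow_add, pow_mul, hω3, one_pow, one_mul]
  -- cross-sector entries vanish
  have Z : ∀ p q : T3,
      (p.1.val + p.2.1.val + p.2.2.val) % 3 ≠ (q.1.val + q.2.1.val + q.2.2.val) % 3 →
      M p q = 0 := by
    intro p q h
    have hd := hMU p q
    rw [hU1d, hU1d] at hd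
    have hd2 : M p q * ω ^ ((q.1.val + q.2.1.val + q.2.2.val) % 3)
        = ω ^ ((p.1.val + p.2.1.val + p.2.2.val) % 3) * M p q := by
      rw [← hmod, ← hmod]; exact hd
    by_contra hM
    exact hpow _ _ (Nat.mod_lt _ (by norm_num)) (Nat.mod_lt _ (by norm_num)) (Ne.symm h)
      (mul_left_cancel₀ hM (by linear_combination hd2))
  -- Hermitian entry facts
  have hherm : ∀ p q : T3, star (M q p) = M p q := by
    intro p q
    have h := congrFun (congrFun hH p) q
    rwa [Matrix.conjTranspose_apply] at h
  -- GHZ fixed-vector facts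
  have hs2c : ((Real.sqrt 2 : ℝ) : ℂ) ≠ 0 :=
    Complex.ofReal_ne_zero.mpr (ne_of_gt (Real.sqrt_pos.mpr (by norm_num)))
  have hga := congrFun hGHZ (0,0,0)
  have hgh := congrFun hGHZ (1,1,1)
  simp (config := {decide := true}) [Matrix.mulVec, dotProduct, GHZ, ket3, tp3, e2,
    Fintype.sum_prod_type, Fin.sum_univ_two] at hga hgh
  have hxy : M 0 0 + M 0 1 = 1 :=
    mul_right_cancel₀ (inv_ne_zero hs2c) (by linear_combination hga)
  have hzw : M 1 0 + M 1 1 = 1 :=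
    mul_right_cancel₀ (inv_ne_zero hs2c) (by linear_combination hgh)
  have hyz : M 0 1 = M 1 0 := by
    have h1 : star (M 1 0) = M 0 1 := hherm 0 1
    have h2 : star (M 1 1) = M 1 1 := hherm 1 1
    have h3 : (M 1 0 : ℂ) = 1 - M 1 1 := by linear_combination hzw
    rw [← h1, h3, star_sub, star_one, h2]
  -- permutation facts
  have hp1 : M (0,0,1) (0,0,1) = M (0,1,0) (0,1,0) := by
    have h := congrFun (congrFun (hperm (Equiv.swap 1 2)) ((0:Fin 2),(0:Fin 2),(1:Fin 2))) ((0:Fin 2),(1:Fin 2),(0:Fin 2))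
    simp (config := {decide := true}) [Matrix.mul_apply, permMat, Fintype.sum_prod_type, Fin.sum_univ_two] at h
    first | linear_combination h | linear_combination -h
  have hp2 : M (0,0,1) (0,0,1) = M (1,0,0) (1,0,0) := by
    have h := congrFun (congrFun (hperm (Equiv.swap 0 2)) ((0:Fin 2),(0:Fin 2),(1:Fin 2))) ((1:Fin 2),(0:Fin 2),(0:Fin 2))
    simp (config := {decide := true}) [Matrix.mul_apply, permMat, Fintype.sum_prod_type, Fin.sum_univ_two] at h
    first | linear_combination h | linear_combination -h
  have hp3 : M (0,0,1) (0,1,0) = M (0,1,0) (0,0,1) := by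
    have h := congrFun (congrFun (hperm (Equiv.swap 1 2)) ((0:Fin 2),(0:Fin 2),(1:Fin 2))) ((0:Fin 2),(0:Fin 2),(1:Fin 2))
    simp (config := {decide := true}) [Matrix.mul_apply, permMat, Fintype.sum_prod_type, Fin.sum_univ_two] at h
    first | linear_combination h | linear_combination -h
  have hp4 : M (0,0,1) (1,0,0) = M (0,0,1) (0,1,0) := by
    have h := congrFun (congrFun (hperm (Equiv.swap 0 1)) ((0:Fin 2),(0:Fin 2),(1:Fin 2))) ((0:Fin 2),(1:Fin 2),(0:Fin 2))
    simp (config := {decide := true}) [Matrix.mul_apply, permMat, Fintype.sum_prod_type, Fin.sum_univ_two] at h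
    first | linear_combination h | linear_combination -h
  have hp5 : M (0,1,0) (0,0,1) = M (1,0,0) (0,0,1) := by
    have h := congrFun (congrFun (hperm (Equiv.swap 0 1)) ((0:Fin 2),(1:Fin 2),(0:Fin 2))) ((0:Fin 2),(0:Fin 2),(1:Fin 2))
    simp (config := {decide := true}) [Matrix.mul_apply, permMat, Fintype.sum_prod_type, Fin.sum_univ_two] at h
    first | linear_combination h | linear_combination -h
  have hp6 : M (0,1,0) (1,0,0) = M (0,1,0) (0,0,1) := by
    have h := congrFun (congrFun (hperm (Equiv.swap 0 2)) ((0:Fin 2),(1:Fin 2),(0:Fin 2))) ((0:Fin 2),(0:Fin 2),(1:Fin 2))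
    simp (config := {decide := true}) [Matrix.mul_apply, permMat, Fintype.sum_prod_type, Fin.sum_univ_two] at h
    first | linear_combination h | linear_combination -h
  have hp7 : M (0,0,1) (0,1,0) = M (1,0,0) (0,1,0) := by
    have h := congrFun (congrFun (hperm (Equiv.swap 0 2)) ((0:Fin 2),(0:Fin 2),(1:Fin 2))) ((0:Fin 2),(1:Fin 2),(0:Fin 2))
    simp (config := {decide := true}) [Matrix.mul_apply, permMat, Fintype.sum_prod_type, Fin.sum_univ_two] at h
    first | linear_combination h | linear_combination -h
  have hq1 : M (0,1,1) (0,1,1) = M (1,0,1) (1,0,1) := by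
    have h := congrFun (congrFun (hperm (Equiv.swap 0 1)) ((0:Fin 2),(1:Fin 2),(1:Fin 2))) ((1:Fin 2),(0:Fin 2),(1:Fin 2))
    simp (config := {decide := true}) [Matrix.mul_apply, permMat, Fintype.sum_prod_type, Fin.sum_univ_two] at h
    first | linear_combination h | linear_combination -h
  have hq2 : M (0,1,1) (0,1,1) = M (1,1,0) (1,1,0) := by
    have h := congrFun (congrFun (hperm (Equiv.swap 0 2)) ((0:Fin 2),(1:Fin 2),(1:Fin 2))) ((1:Fin 2),(1:Fin 2),(0:Fin 2))
    simp (config := {decide := true}) [Matrix.mul_apply, permMat, Fintype.sum_prod_type, Fin.sum_univ_two] at h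
    first | linear_combination h | linear_combination -h
  have hq3 : M (0,1,1) (1,0,1) = M (1,0,1) (0,1,1) := by
    have h := congrFun (congrFun (hperm (Equiv.swap 0 1)) ((0:Fin 2),(1:Fin 2),(1:Fin 2))) ((0:Fin 2),(1:Fin 2),(1:Fin 2))
    simp (config := {decide := true}) [Matrix.mul_apply, permMat, Fintype.sum_prod_type, Fin.sum_univ_two] at h
    first | linear_combination h | linear_combination -h
  have hq4 : M (0,1,1) (1,1,0) = M (0,1,1) (1,0,1) := by
    have h := congrFun (congrFun (hperm (Equiv.swap 1 2)) ((0:Fin 2),(1:Fin 2),(1:Fin 2))) ((1:Fin 2),(0:Fin 2),(1:Fin 2))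
    simp (config := {decide := true}) [Matrix.mul_apply, permMat, Fintype.sum_prod_type, Fin.sum_univ_two] at h
    first | linear_combination h | linear_combination -h
  have hq5 : M (1,0,1) (0,1,1) = M (1,1,0) (0,1,1) := by
    have h := congrFun (congrFun (hperm (Equiv.swap 1 2)) ((1:Fin 2),(0:Fin 2),(1:Fin 2))) ((0:Fin 2),(1:Fin 2),(1:Fin 2))
    simp (config := {decide := true}) [Matrix.mul_apply, permMat, Fintype.sum_prod_type, Fin.sum_univ_two] at h
    first | linear_combination h | linear_combination -h
  have hq6 : M (1,0,1) (1,1,0) = M (1,0,1) (0,1,1) := by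
    have h := congrFun (congrFun (hperm (Equiv.swap 0 2)) ((1:Fin 2),(0:Fin 2),(1:Fin 2))) ((0:Fin 2),(1:Fin 2),(1:Fin 2))
    simp (config := {decide := true}) [Matrix.mul_apply, permMat, Fintype.sum_prod_type, Fin.sum_univ_two] at h
    first | linear_combination h | linear_combination -h
  have hq7 : M (0,1,1) (1,0,1) = M (1,1,0) (1,0,1) := by
    have h := congrFun (congrFun (hperm (Equiv.swap 0 2)) ((0:Fin 2),(1:Fin 2),(1:Fin 2))) ((1:Fin 2),(0:Fin 2),(1:Fin 2))
    simp (config := {decide := true}) [Matrix.mul_apply, permMat, Fintype.sum_prod_type, Fin.sum_univ_two] at h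
    first | linear_combination h | linear_combination -h
  refine ⟨M 0 0 - M 0 1,
          M (0,0,1) (0,0,1) - M (0,0,1) (0,1,0),
          M (0,1,1) (0,1,1) - M (0,1,1) (1,0,1),
          M (0,1,1) (0,1,1) + 2 * M (0,1,1) (1,0,1), ?_, ?_, ?_, ?_, ?_, ?_⟩
  -- v1
  · funext p
    obtain ⟨i,j,k⟩ := p
    fin_cases i <;> fin_cases j <;> fin_cases k <;>
      simp (config := {decide := true}) [Matrix.mulVec, dotProduct, v1, ket3, tp3, e2,
        Fintype.sum_prod_type, Fin.sum_univ_two]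
    · change _ = (M (0,0,0) (0,0,0) - M (0,0,0) (1,1,1)) * _; ring
    · linear_combination (Real.sqrt 2:ℂ)⁻¹ * (Z (0,0,1) (0,0,0) (by decide) - Z (0,0,1) (1,1,1) (by decide))
    · linear_combination (Real.sqrt 2:ℂ)⁻¹ * (Z (0,1,0) (0,0,0) (by decide) - Z (0,1,0) (1,1,1) (by decide))
    · linear_combination (Real.sqrt 2:ℂ)⁻¹ * (Z (0,1,1) (0,0,0) (by decide) - Z (0,1,1) (1,1,1) (by decide))
    · linear_combination (Real.sqrt 2:ℂ)⁻¹ * (Z (1,0,0) (0,0,0) (by decide) - Z (1,0,0) (1,1,1) (by decide))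
    · linear_combination (Real.sqrt 2:ℂ)⁻¹ * (Z (1,0,1) (0,0,0) (by decide) - Z (1,0,1) (1,1,1) (by decide))
    · linear_combination (Real.sqrt 2:ℂ)⁻¹ * (Z (1,1,0) (0,0,0) (by decide) - Z (1,1,0) (1,1,1) (by decide))
    · linear_combination (Real.sqrt 2:ℂ)⁻¹ * (hxy - hzw - 2*hyz)
  -- v2
  · funext p
    obtain ⟨i,j,k⟩ := p
    fin_cases i <;> fin_cases j <;> fin_cases k <;>
      simp (config := {decide := true}) [Matrix.mulVec, dotProduct, v2, ket3, tp3, e2,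
        Fintype.sum_prod_type, Fin.sum_univ_two]
    · linear_combination (Real.sqrt 2:ℂ)⁻¹ * (Z (0,0,0) (0,0,1) (by decide) - Z (0,0,0) (0,1,0) (by decide))
    · ring
    · linear_combination (Real.sqrt 2:ℂ)⁻¹ * (hp1 - hp3)
    · linear_combination (Real.sqrt 2:ℂ)⁻¹ * (Z (0,1,1) (0,0,1) (by decide) - Z (0,1,1) (0,1,0) (by decide))
    · linear_combination (Real.sqrt 2:ℂ)⁻¹ * (-hp5 - hp3 + hp7)
    · linear_combination (Real.sqrt 2:ℂ)⁻¹ * (Z (1,0,1) (0,0,1) (by decide) - Z (1,0,1) (0,1,0) (by decide))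
    · linear_combination (Real.sqrt 2:ℂ)⁻¹ * (Z (1,1,0) (0,0,1) (by decide) - Z (1,1,0) (0,1,0) (by decide))
    · linear_combination (Real.sqrt 2:ℂ)⁻¹ * (Z (1,1,1) (0,0,1) (by decide) - Z (1,1,1) (0,1,0) (by decide))
  -- v3
  · funext p
    obtain ⟨i,j,k⟩ := p
    fin_cases i <;> fin_cases j <;> fin_cases k <;>
      simp (config := {decide := true}) [Matrix.mulVec, dotProduct, v3, ket3, tp3, e2,
        Fintype.sum_prod_type, Fin.sum_univ_two]
    · linear_combination (Real.sqrt 2:ℂ)⁻¹ * (Z (0,0,0) (0,0,1) (by decide) - Z (0,0,0) (1,0,0) (by decide))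
    · linear_combination (-(Real.sqrt 2:ℂ)⁻¹) * hp4
    · linear_combination (-(Real.sqrt 2:ℂ)⁻¹) * hp6
    · linear_combination (Real.sqrt 2:ℂ)⁻¹ * (Z (0,1,1) (0,0,1) (by decide) - Z (0,1,1) (1,0,0) (by decide))
    · linear_combination (Real.sqrt 2:ℂ)⁻¹ * (hp2 - hp3 - hp5)
    · linear_combination (Real.sqrt 2:ℂ)⁻¹ * (Z (1,0,1) (0,0,1) (by decide) - Z (1,0,1) (1,0,0) (by decide))
    · linear_combination (Real.sqrt 2:ℂ)⁻¹ * (Z (1,1,0) (0,0,1) (by decide) - Z (1,1,0) (1,0,0) (by decide))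
    · linear_combination (Real.sqrt 2:ℂ)⁻¹ * (Z (1,1,1) (0,0,1) (by decide) - Z (1,1,1) (1,0,0) (by decide))
  -- v4
  · funext p
    obtain ⟨i,j,k⟩ := p
    fin_cases i <;> fin_cases j <;> fin_cases k <;>
      simp (config := {decide := true}) [Matrix.mulVec, dotProduct, v4, ket3, tp3, e2,
        Fintype.sum_prod_type, Fin.sum_univ_two]
    · linear_combination (Real.sqrt 2:ℂ)⁻¹ * (Z (0,0,0) (0,1,1) (by decide) - Z (0,0,0) (1,0,1) (by decide))
    · linear_combination (Real.sqrt 2:ℂ)⁻¹ * (Z (0,0,1) (0,1,1) (by decide) - Z (0,0,1) (1,0,1) (by decide))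
    · linear_combination (Real.sqrt 2:ℂ)⁻¹ * (Z (0,1,0) (0,1,1) (by decide) - Z (0,1,0) (1,0,1) (by decide))
    · ring
    · linear_combination (Real.sqrt 2:ℂ)⁻¹ * (Z (1,0,0) (0,1,1) (by decide) - Z (1,0,0) (1,0,1) (by decide))
    · linear_combination (Real.sqrt 2:ℂ)⁻¹ * (hq1 - hq3)
    · linear_combination (Real.sqrt 2:ℂ)⁻¹ * (-hq5 - hq3 + hq7)
    · linear_combination (Real.sqrt 2:ℂ)⁻¹ * (Z (1,1,1) (0,1,1) (by decide) - Z (1,1,1) (1,0,1) (by decide))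
  -- v5
  · funext p
    obtain ⟨i,j,k⟩ := p
    fin_cases i <;> fin_cases j <;> fin_cases k <;>
      simp (config := {decide := true}) [Matrix.mulVec, dotProduct, v5, ket3, tp3, e2,
        Fintype.sum_prod_type, Fin.sum_univ_two]
    · linear_combination (Real.sqrt 2:ℂ)⁻¹ * (Z (0,0,0) (0,1,1) (by decide) - Z (0,0,0) (1,1,0) (by decide))
    · linear_combination (Real.sqrt 2:ℂ)⁻¹ * (Z (0,0,1) (0,1,1) (by decide) - Z (0,0,1) (1,1,0) (by decide))
    · linear_combination (Real.sqrt 2:ℂ)⁻¹ * (Z (0,1,0) (0,1,1) (by decide) - Z (0,1,0) (1,1,0) (by decide))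
    · linear_combination (-(Real.sqrt 2:ℂ)⁻¹) * hq4
    · linear_combination (Real.sqrt 2:ℂ)⁻¹ * (Z (1,0,0) (0,1,1) (by decide) - Z (1,0,0) (1,1,0) (by decide))
    · linear_combination (-(Real.sqrt 2:ℂ)⁻¹) * hq6
    · linear_combination (Real.sqrt 2:ℂ)⁻¹ * (hq2 - hq3 - hq5)
    · linear_combination (Real.sqrt 2:ℂ)⁻¹ * (Z (1,1,1) (0,1,1) (by decide) - Z (1,1,1) (1,1,0) (by decide))
  -- v6
  · funext p
    obtain ⟨i,j,k⟩ := p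
    fin_cases i <;> fin_cases j <;> fin_cases k <;>
      simp (config := {decide := true}) [Matrix.mulVec, dotProduct, v6, ket3, tp3, e2,
        Fintype.sum_prod_type, Fin.sum_univ_two]
    · linear_combination (Real.sqrt 3:ℂ)⁻¹ * (Z (0,0,0) (0,1,1) (by decide) + Z (0,0,0) (1,0,1) (by decide) + Z (0,0,0) (1,1,0) (by decide))
    · linear_combination (Real.sqrt 3:ℂ)⁻¹ * (Z (0,0,1) (0,1,1) (by decide) + Z (0,0,1) (1,0,1) (by decide) + Z (0,0,1) (1,1,0) (by decide))
    · linear_combination (Real.sqrt 3:ℂ)⁻¹ * (Z (0,1,0) (0,1,1) (by decide) + Z (0,1,0) (1,0,1) (by decide) + Z (0,1,0) (1,1,0) (by decide))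
    · linear_combination (Real.sqrt 3:ℂ)⁻¹ * hq4
    · linear_combination (Real.sqrt 3:ℂ)⁻¹ * (Z (1,0,0) (0,1,1) (by decide) + Z (1,0,0) (1,0,1) (by decide) + Z (1,0,0) (1,1,0) (by decide))
    · linear_combination (Real.sqrt 3:ℂ)⁻¹ * (-2*hq3 - hq1 + hq6)
    · linear_combination (Real.sqrt 3:ℂ)⁻¹ * (-hq5 - hq3 - hq7 - hq2)
    · linear_combination (Real.sqrt 3:ℂ)⁻¹ * (Z (1,1,1) (0,1,1) (by decide) + Z (1,1,1) (1,0,1) (by decide) + Z (1,1,1) (1,1,0) (by decide))
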